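/- Let f be an admissible α-homogeneous speed with f(0, e) = L₀ > 0 (nondegenerate), and set γ₊ = L₀^{-1/α}, β = 1/2 - 1/(2α). The function v₊ defined by v₊/(r(1+v₊²)^β) = γ₊ is a strict supersolution of the translator ODE v' = (1+v²)^{1+β} g(v/(r(1+v²)^β), 1) for r > 0, since g(γ₊, 1) = 0 and v₊' > 0. -/

import Mathlib

/-- In the nondegenerate case, v₊ defined by v₊/(r(1+v₊²)^β) = γ₊ = f(0,e)^{-1/α}
is a strict supersolution of the translator ODE, since g(γ₊,1) = 0 and v₊' > 0. -/
theorem stmt15 (α L₀ : ℝ) (hα : 0 < α) (hL₀ : 0 < L₀)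
    (β γp : ℝ) (hβ : β = 1 / 2 - 1 / (2 * α)) (hγp : γp = L₀ ^ (-(1 / α)))
    (g : ℝ → ℝ) (hg : g γp = 0) (vp : ℝ → ℝ)
    (hvp : ∀ r > (0 : ℝ), 0 < vp r ∧ vp r / (r * (1 + (vp r) ^ 2) ^ β) = γp) :
    ∀ r > (0 : ℝ), ∀ d : ℝ, HasDerivAt vp d r →
      (1 + (vp r) ^ 2) ^ (1 + β) * g (vp r / (r * (1 + (vp r) ^ 2) ^ β)) < d := by
  intro r hr d hd
  obtain ⟨hv0, hrel⟩ := hvp r hr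
  set v := vp r with hv
  have hγpos : 0 < γp := by rw [hγp]; positivity
  have hA : (0:ℝ) < 1 + v ^ 2 := by positivity
  have hApow : (0:ℝ) < (1 + v ^ 2) ^ β := Real.rpow_pos_of_pos hA β
  -- vp agrees near r with the explicit function
  have heq : vp =ᶠ[nhds r] fun s => γp * (s * (1 + (vp s) ^ 2) ^ β) := by
    filter_upwards [isOpen_Ioi.mem_nhds hr] with s hs
    obtain ⟨hs0, hrs⟩ := hvp s hs
    have hden : s * (1 + (vp s) ^ 2) ^ β ≠ 0 := by
      have : (0:ℝ) < (1 + (vp s) ^ 2) ^ β := Real.rpow_pos_of_pos (by positivity) β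
      have hs' : (0:ℝ) < s := hs
      positivity
    rw [div_eq_iff hden] at hrs
    linarith [hrs]
  -- derivative of the explicit function
  have hinner : HasDerivAt (fun s => 1 + (vp s) ^ 2) (2 * v ^ 1 * d) r := by
    exact ((hasDerivAt_const r (1:ℝ)).add (hd.pow 2)).congr_deriv (by simp [hv])
  have hpow : HasDerivAt (fun s => (1 + (vp s) ^ 2) ^ β)
      (β * (1 + v ^ 2) ^ (β - 1) * (2 * v ^ 1 * d)) r := by
    exact (Real.hasDerivAt_rpow_const (Or.inl (ne_of_gt hA))).comp r hinner
  have hF : HasDerivAt (fun s => γp * (s * (1 + (vp s) ^ 2) ^ β))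
      (γp * (1 * ((1 + v ^ 2) ^ β) + r * (β * (1 + v ^ 2) ^ (β - 1) * (2 * v ^ 1 * d)))) r :=
    ((hasDerivAt_id r).mul hpow).const_mul γp
  have hd' : HasDerivAt vp
      (γp * (1 * ((1 + v ^ 2) ^ β) + r * (β * (1 + v ^ 2) ^ (β - 1) * (2 * v ^ 1 * d)))) r :=
    hF.congr_of_eventuallyEq heq
  have hdeq : d = γp * ((1 + v ^ 2) ^ β) + γp * r * β * (1 + v ^ 2) ^ (β - 1) * (2 * v * d) := by
    have h := hd.unique hd'
    linear_combination h
  -- v = γp * r * (1+v²)^β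
  have hveq : v = γp * (r * (1 + v ^ 2) ^ β) := by
    have hden : r * (1 + v ^ 2) ^ β ≠ 0 := by positivity
    field_simp at hrel
    linarith [hrel]
  have hpowsub : (1 + v ^ 2) ^ (β - 1) * (1 + v ^ 2) = (1 + v ^ 2) ^ β := by
    rw [← Real.rpow_add_one (ne_of_gt hA)]; ring_nf
  -- multiply hdeq by (1+v²)
  have hc : d * ((1 + v ^ 2) - 2 * β * v ^ 2) = γp * (1 + v ^ 2) ^ β * (1 + v ^ 2) := by
    have h1 : d * (1 + v ^ 2) = γp * ((1 + v ^ 2) ^ β) * (1 + v ^ 2)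
        + 2 * β * v * d * (γp * (r * (1 + v ^ 2) ^ β)) := by
      linear_combination (1 + v ^ 2) * hdeq + (γp * r * β * 2 * v * d) * hpowsub
    rw [← hveq] at h1
    nlinarith [h1]
  have hfac : 0 < (1 + v ^ 2) - 2 * β * v ^ 2 := by
    have h2β : 1 - 2 * β = 1 / α := by
      have hα' : α ≠ 0 := ne_of_gt hα
      rw [hβ]; field_simp; ring
    have : (1 + v ^ 2) - 2 * β * v ^ 2 = 1 + (1 - 2 * β) * v ^ 2 := by ring
    rw [this, h2β]
    have : 0 < 1 / α := by positivity
    nlinarith [sq_nonneg v]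
  have hdpos : 0 < d := by
    have h2 : 0 < γp * (1 + v ^ 2) ^ β * (1 + v ^ 2) := by positivity
    nlinarith [hc]
  rw [hrel, hg, mul_zero]
  exact hdpos
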